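/- For any fat set A in a group G and any positive integer n, there exists a positive integer m such that every m-element subset F of G contains an n-element subset F' with F'⁻¹F' ⊆ A. -/

import Mathlib

open Pointwise

def IsFatWith {G : Type*} [Group G] (m : ℕ) (A : Set G) : Prop :=
  ∀ F : Finset G, F.card = m →
    ∃ D : Finset G, D ⊆ F ∧ D.card = 2 ∧ (D : Set G)⁻¹ * (D : Set G) ⊆ A

def IsFat {G : Type*} [Group G] (A : Set G) : Prop :=
  ∃ k : ℕ, IsFatWith k A

/-- Two-colour finite Ramsey theorem for a symmetric relation. -/
lemma ramsey_aux {α : Type*} (r : α → α → Prop) (hsymm : ∀ x y, r x y → r y x) :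
    ∀ a b : ℕ, ∃ m : ℕ, ∀ F : Finset α, m ≤ F.card →
      (∃ C, C ⊆ F ∧ C.card = a ∧ ∀ x ∈ C, ∀ y ∈ C, x ≠ y → ¬ r x y) ∨
      (∃ C, C ⊆ F ∧ C.card = b ∧ ∀ x ∈ C, ∀ y ∈ C, x ≠ y → r x y) := by
  classical
  intro a
  induction a with
  | zero =>
    intro b
    exact ⟨0, fun F _ => Or.inl ⟨∅, Finset.empty_subset _, Finset.card_empty,
      fun x hx => absurd hx (Finset.notMem_empty x)⟩⟩
  | succ a iha =>
    intro b
    induction b with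
    | zero =>
      exact ⟨0, fun F _ => Or.inr ⟨∅, Finset.empty_subset _, Finset.card_empty,
        fun x hx => absurd hx (Finset.notMem_empty x)⟩⟩
    | succ b ihb =>
      obtain ⟨m₁, h₁⟩ := iha (b + 1)
      obtain ⟨m₂, h₂⟩ := ihb
      refine ⟨m₁ + m₂ + 1, fun F hF => ?_⟩
      obtain ⟨x, hx⟩ : F.Nonempty := Finset.card_pos.mp (by omega)
      set F' := F.erase x with hF'
      have hcard : m₁ + m₂ ≤ F'.card := by
        rw [hF', Finset.card_erase_of_mem hx]
        omega
      set N₁ := F'.filter (fun y => ¬ r x y) with hN₁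
      set N₂ := F'.filter (fun y => r x y) with hN₂
      have hsplit : N₂.card + N₁.card = F'.card :=
        Finset.card_filter_add_card_filter_not (p := fun y => r x y)
      have : m₁ ≤ N₁.card ∨ m₂ ≤ N₂.card := by omega
      rcases this with h | h
      · rcases h₁ N₁ h with ⟨C, hCsub, hCcard, hCbad⟩ | ⟨C, hCsub, hCcard, hCgood⟩
        · -- extend the bad clique by x
          refine Or.inl ⟨insert x C, ?_, ?_, ?_⟩
          · intro y hy
            rcases Finset.mem_insert.mp hy with rfl | hy
            · exact hx
            · exact Finset.erase_subset _ _ (Finset.filter_subset _ _ (hCsub hy))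
          · have hxC : x ∉ C := fun hxC =>
              Finset.notMem_erase x F (Finset.filter_subset _ _ (hCsub hxC))
            rw [Finset.card_insert_of_notMem hxC, hCcard]
          · intro u hu v hv huv
            rcases Finset.mem_insert.mp hu with rfl | hu'
            · rcases Finset.mem_insert.mp hv with rfl | hv'
              · exact absurd rfl huv
              · exact (Finset.mem_filter.mp (hCsub hv')).2
            · rcases Finset.mem_insert.mp hv with rfl | hv'
              · intro hr
                exact (Finset.mem_filter.mp (hCsub hu')).2 (hsymm _ _ hr)
              · exact hCbad u hu' v hv' huv
        · exact Or.inr ⟨C, fun y hy =>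
            Finset.erase_subset _ _ (Finset.filter_subset _ _ (hCsub hy)),
            hCcard, hCgood⟩
      · rcases h₂ N₂ h with ⟨C, hCsub, hCcard, hCbad⟩ | ⟨C, hCsub, hCcard, hCgood⟩
        · exact Or.inl ⟨C, fun y hy =>
            Finset.erase_subset _ _ (Finset.filter_subset _ _ (hCsub hy)),
            hCcard, hCbad⟩
        · -- extend the good clique by x
          refine Or.inr ⟨insert x C, ?_, ?_, ?_⟩
          · intro y hy
            rcases Finset.mem_insert.mp hy with rfl | hy
            · exact hx
            · exact Finset.erase_subset _ _ (Finset.filter_subset _ _ (hCsub hy))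
          · have hxC : x ∉ C := fun hxC =>
              Finset.notMem_erase x F (Finset.filter_subset _ _ (hCsub hxC))
            rw [Finset.card_insert_of_notMem hxC, hCcard]
          · intro u hu v hv huv
            rcases Finset.mem_insert.mp hu with rfl | hu'
            · rcases Finset.mem_insert.mp hv with rfl | hv'
              · exact absurd rfl huv
              · exact (Finset.mem_filter.mp (hCsub hv')).2
            · rcases Finset.mem_insert.mp hv with rfl | hv'
              · exact hsymm _ _ (Finset.mem_filter.mp (hCsub hu')).2
              · exact hCgood u hu' v hv' huv

theorem stmt8 {G : Type*} [Group G] (A : Set G) (hA : IsFat A)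
    (n : ℕ) (hn : 0 < n) :
    ∃ m : ℕ, 0 < m ∧ ∀ F : Finset G, F.card = m →
      ∃ F' : Finset G, F' ⊆ F ∧ F'.card = n ∧
        (F' : Set G)⁻¹ * (F' : Set G) ⊆ A := by
  classical
  obtain ⟨k, hk⟩ := hA
  set r : G → G → Prop := fun x y => x⁻¹ * y ∈ A ∧ y⁻¹ * x ∈ A with hr
  have hsymm : ∀ x y, r x y → r y x := fun x y h => ⟨h.2, h.1⟩
  obtain ⟨m₀, hm₀⟩ := ramsey_aux r hsymm k n
  refine ⟨max m₀ (max k 1), by positivity, fun F hF => ?_⟩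
  -- first, 1 ∈ A
  have hone : (1 : G) ∈ A := by
    obtain ⟨K, hKF, hKcard⟩ := Finset.exists_subset_card_eq (s := F) (n := k) (by omega)
    obtain ⟨D, hDK, hDcard, hDA⟩ := hk K hKcard
    obtain ⟨d, hd⟩ : D.Nonempty := Finset.card_pos.mp (by omega)
    exact hDA ⟨d⁻¹, by simpa using hd, d, hd, inv_mul_cancel d⟩
  rcases hm₀ F (by omega) with ⟨C, hCsub, hCcard, hCbad⟩ | ⟨C, hCsub, hCcard, hCgood⟩
  · -- a bad k-clique contradicts fatness
    exfalso
    obtain ⟨D, hDC, hDcard, hDA⟩ := hk C hCcard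
    obtain ⟨u, v, huv, rfl⟩ := Finset.card_eq_two.mp hDcard
    have hu : u ∈ ({u, v} : Finset G) := by simp
    have hv : v ∈ ({u, v} : Finset G) := by simp
    refine hCbad u (hDC hu) v (hDC hv) huv ?_
    constructor
    · exact hDA ⟨u⁻¹, by simpa using hu, v, by simpa using hv, rfl⟩
    · exact hDA ⟨v⁻¹, by simpa using hv, u, by simpa using hu, rfl⟩
  · refine ⟨C, hCsub, hCcard, ?_⟩
    rintro z ⟨u, hu, v, hv, rfl⟩
    rw [Set.mem_inv] at hu
    simp only [Finset.mem_coe] at hu hv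
    by_cases h : u⁻¹ = v
    · subst h
      simpa using hone
    · have := hCgood u⁻¹ (by simpa using hu) v hv h
      simpa using this.1
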